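/- Let n, m ≥ 2 be natural numbers, b a nonnegative integer with b < m, and c ≥ 1 a natural number such that for every prime p dividing c there exists a natural number k ≥ 1 with p^k ≥ 3, φ(p^k) ∣ n, and m ≤ p^k − 1. Then the equation x_1^n + ⋯ + x_m^n = b·c^n has no solution in positive integers. In particular, under these hypotheses the equation x_1^n + ⋯ + x_m^n = c^n has no solution in positive integers. -/

import Mathlib

lemma aux_stmt17 (n m b : ℕ) (hn : 2 ≤ n) (hm : 2 ≤ m) (hb : b < m) :
    ∀ c, 1 ≤ c →
    (∀ p : ℕ, p.Prime → p ∣ c →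
      ∃ k : ℕ, 1 ≤ k ∧ 3 ≤ p ^ k ∧ Nat.totient (p ^ k) ∣ n ∧ m ≤ p ^ k - 1) →
    ¬ ∃ x : Fin m → ℕ, (∀ i, 0 < x i) ∧ ∑ i, x i ^ n = b * c ^ n := by
  intro c
  induction c using Nat.strong_induction_on with
  | _ c ih =>
  rintro hc hφ ⟨x, hx, hsum⟩
  rcases eq_or_lt_of_le hc with h1 | h1
  · -- c = 1
    rw [← h1] at hsum
    simp at hsum
    have hmle : m ≤ ∑ i, x i ^ n := by
      calc m = ∑ _i : Fin m, 1 := by simp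
      _ ≤ ∑ i, x i ^ n := Finset.sum_le_sum fun i _ => Nat.one_le_pow _ _ (hx i)
    omega
  · obtain ⟨p, hp, hpc⟩ := Nat.exists_prime_and_dvd (by omega : c ≠ 1)
    obtain ⟨k, hk1, hk3, hdvd, hmle⟩ := hφ p hp hpc
    set q := p ^ k with hq
    have hp2 : 2 ≤ p := hp.two_le
    have hq1 : 1 < q := by omega
    haveI : NeZero q := ⟨by omega⟩
    -- k ≤ n
    have hφpos : 0 < Nat.totient q := Nat.totient_pos.mpr (by omega)
    have hφn : Nat.totient q ≤ n := Nat.le_of_dvd (by omega) hdvd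
    have hkφ : k ≤ Nat.totient q := by
      rw [hq, Nat.totient_prime_pow hp hk1]
      have h1 : k - 1 < 2 ^ (k - 1) := Nat.lt_two_pow_self
      have h2 : 2 ^ (k - 1) ≤ p ^ (k - 1) := Nat.pow_le_pow_left hp2 _
      have h3 : p ^ (k - 1) * 1 ≤ p ^ (k - 1) * (p - 1) :=
        Nat.mul_le_mul_left _ (by omega)
      omega
    have hkn : k ≤ n := le_trans hkφ hφn
    have hqcn : q ∣ c ^ n :=
      dvd_trans (pow_dvd_pow p hkn) (pow_dvd_pow_of_dvd hpc n)
    -- each term mod q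
    have hterm : ∀ i, (x i : ZMod q) ^ n = if p ∣ x i then 0 else 1 := by
      intro i
      split_ifs with h
      · have : q ∣ x i ^ n := dvd_trans (pow_dvd_pow p hkn) (pow_dvd_pow_of_dvd h n)
        have := (ZMod.natCast_eq_zero_iff (x i ^ n) q).mpr this
        push_cast at this
        exact this
      · have hcop : (x i).Coprime q := Nat.Coprime.pow_right _
          ((Nat.Prime.coprime_iff_not_dvd hp).mpr h).symm
        have hu : IsUnit ((x i : ZMod q)) := (ZMod.isUnit_iff_coprime _ _).mpr hcop
        obtain ⟨u, hu⟩ := hu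
        obtain ⟨d, hd⟩ := hdvd
        rw [← hu, ← Units.val_pow_eq_pow_val, hd, pow_mul, ZMod.pow_totient]
        simp
    -- cast the sum equation
    have hcast : (∑ i, (x i : ZMod q) ^ n) = (b : ZMod q) * (c : ZMod q) ^ n := by
      have := congrArg (fun t : ℕ => (t : ZMod q)) hsum
      push_cast at this
      exact this
    have hc0 : (c : ZMod q) ^ n = 0 := by
      have := (ZMod.natCast_eq_zero_iff (c ^ n) q).mpr hqcn
      push_cast at this
      exact this
    set t := (Finset.univ.filter (fun i : Fin m => ¬ p ∣ x i)).card with ht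
    have hsumt : (∑ i, (x i : ZMod q) ^ n) = (t : ZMod q) := by
      simp_rw [hterm]
      rw [Finset.sum_ite, Finset.sum_const, Finset.sum_const]
      simp [ht]
    have htz : (t : ZMod q) = 0 := by
      rw [← hsumt, hcast, hc0, mul_zero]
    have hqt : q ∣ t := (ZMod.natCast_eq_zero_iff t q).mp htz
    have htm : t ≤ m := le_trans (Finset.card_filter_le _ _) (by simp)
    have ht0 : t = 0 := Nat.eq_zero_of_dvd_of_lt hqt (by omega)
    have hall : ∀ i, p ∣ x i := by
      intro i
      by_contra h
      have : i ∈ Finset.univ.filter (fun i : Fin m => ¬ p ∣ x i) := by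
        simp [h]
      rw [Finset.card_eq_zero] at ht0
      simp [ht0] at this
    -- descent
    obtain ⟨c', hc'⟩ := hpc
    have hc'pos : 1 ≤ c' := by
      rcases Nat.eq_zero_or_pos c' with h | h
      · subst h; simp at hc'; omega
      · exact h
    have hc'lt : c' < c := by
      calc c' < 2 * c' := by omega
      _ ≤ p * c' := Nat.mul_le_mul_right _ hp2
      _ = c := hc'.symm
    choose y hy using hall
    have hsum' : ∑ i, y i ^ n = b * c' ^ n := by
      have hps : 0 < p ^ n := Nat.pow_pos (by omega)
      apply Nat.eq_of_mul_eq_mul_left hps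
      calc p ^ n * ∑ i, y i ^ n = ∑ i, (p * y i) ^ n := by
            rw [Finset.mul_sum]; congr 1; ext i; rw [mul_pow]
        _ = ∑ i, x i ^ n := by congr 1; ext i; rw [← hy i]
        _ = b * c ^ n := hsum
        _ = p ^ n * (b * c' ^ n) := by rw [hc', mul_pow]; ring
    refine ih c' hc'lt hc'pos ?_ ⟨y, ?_, hsum'⟩
    · intro p' hp' hp'c'
      exact hφ p' hp' (hc' ▸ Dvd.dvd.mul_left hp'c' p)
    · intro i
      have h0 := hx i
      rw [hy i] at h0
      rcases Nat.eq_zero_or_pos (y i) with h | h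
      · rw [h, mul_zero] at h0; omega
      · exact h
  
/-- If `n, m ≥ 2`, `b < m` and `c ≥ 1` is such that every prime `p ∣ c` admits `k ≥ 1`
with `p^k ≥ 3`, `φ(p^k) ∣ n` and `m ≤ p^k - 1`, then `∑ xᵢ^n = b·c^n` has no solution in
positive integers; in particular `∑ xᵢ^n = c^n` has no solution in positive integers. -/
theorem stmt_17 (n m b c : ℕ) (hn : 2 ≤ n) (hm : 2 ≤ m) (hb : b < m) (hc : 1 ≤ c)
    (hφ : ∀ p : ℕ, p.Prime → p ∣ c →
      ∃ k : ℕ, 1 ≤ k ∧ 3 ≤ p ^ k ∧ Nat.totient (p ^ k) ∣ n ∧ m ≤ p ^ k - 1) :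
    (¬ ∃ x : Fin m → ℕ, (∀ i, 0 < x i) ∧ ∑ i, x i ^ n = b * c ^ n) ∧
    (¬ ∃ x : Fin m → ℕ, (∀ i, 0 < x i) ∧ ∑ i, x i ^ n = c ^ n) := by
  constructor
  · exact aux_stmt17 n m b hn hm hb c hc hφ
  · rintro ⟨x, hx, hs⟩
    exact aux_stmt17 n m 1 hn hm (by omega) c hc hφ ⟨x, hx, by rw [one_mul]; exact hs⟩
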